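/- Let G=(V,E) be a finite simple graph. Then rank(EMH_{2,2}(G)) = 6·c(G,C_3) + Σ_{{u,v}} 2·(|V_{u,v}| − 1), where the sum ranges over unordered pairs {u,v} of vertices with d(u,v) = 2 and V_{u,v} = {w ∈ V : w is adjacent to both u and v}, and C_3 is the cycle graph on 3 vertices. -/

import Mathlib

open scoped Classical

variable {V : Type*}

/-- Length of the walk described by a list of landmarks: sum of path-metric
distances between consecutive entries (`⊤`-valued if some pair is unreachable). -/
noncomputable def mlen (G : SimpleGraph V) : List V → ℕ∞
  | [] => 0
  | [_] => 0
  | a :: b :: t => G.edist a b + mlen G (b :: t)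

/-- A list of landmarks is a trail if consecutive entries are distinct and reachable. -/
def IsTrailList (G : SimpleGraph V) (l : List V) : Prop :=
  l.Chain' fun a b => a ≠ b ∧ G.Reachable a b

/-- `trails G k ℓ` is the set `T_{k,ℓ}(G)` of `k`-trails of length `ℓ`,
encoded as lists with `k+1` entries. -/
def trails (G : SimpleGraph V) (k ℓ : ℕ) : Set (List V) :=
  {l | l.length = k + 1 ∧ IsTrailList G l ∧ mlen G l = (ℓ : ℕ∞)}

/-- `etrails G k ℓ` is the set `ET_{k,ℓ}(G)` of eulerian `k`-trails of length `ℓ`. -/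
def etrails (G : SimpleGraph V) (k ℓ : ℕ) : Set (List V) :=
  {l | l ∈ trails G k ℓ ∧ l.Nodup}

/-- Boundary of a single generator: `∂_{·,ℓ}(x₀,…,x_k) = Σ_{i=1}^{k-1} (-1)^i ∂^i`,
where `∂^i` deletes the `i`-th landmark if this does not change the length. -/
noncomputable def bdryElt (G : SimpleGraph V) (ℓ : ℕ) (l : List V) : List V →₀ ℤ :=
  ∑ i ∈ Finset.Ioo 0 (l.length - 1),
    if mlen G (l.eraseIdx i) = (ℓ : ℕ∞) then ((-1 : ℤ) ^ i) • Finsupp.single (l.eraseIdx i) 1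
    else 0

/-- The magnitude differential (length parameter `ℓ`) on the ambient free abelian group
on all landmark lists.  Its restriction to `MC_{k,ℓ}(G)` (chains supported on
`trails G k ℓ`) is `∂_{k,ℓ}`. -/
noncomputable def bdry (G : SimpleGraph V) (ℓ : ℕ) : (List V →₀ ℤ) →ₗ[ℤ] (List V →₀ ℤ) :=
  Finsupp.lsum ℤ fun l => LinearMap.toSpanSingleton ℤ _ (bdryElt G ℓ l)

/-- `MC_{k,ℓ}(G)`: the free abelian group on `T_{k,ℓ}(G)`, realized as the submodule of
finitely supported `ℤ`-valued functions supported on trails. -/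
noncomputable def MC (G : SimpleGraph V) (k ℓ : ℕ) : Submodule ℤ (List V →₀ ℤ) :=
  Finsupp.supported ℤ ℤ (trails G k ℓ)

/-- `EMC_{k,ℓ}(G)`: the free abelian group on `ET_{k,ℓ}(G)`. -/
noncomputable def EMC (G : SimpleGraph V) (k ℓ : ℕ) : Submodule ℤ (List V →₀ ℤ) :=
  Finsupp.supported ℤ ℤ (etrails G k ℓ)

/-- `EMH_{k,k}(G) = ker(∂_{k,k}|_{EMC_{k,k}(G)})`, the first-diagonal eulerian magnitude
homology group (`EMC_{k+1,k}(G) = 0`, so homology is just the kernel). -/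
noncomputable def EMHkk (G : SimpleGraph V) (k : ℕ) : Submodule ℤ (List V →₀ ℤ) :=
  EMC G k k ⊓ LinearMap.ker (bdry G k)

/-- `MH_{k,k}(G) = ker(∂_{k,k}|_{MC_{k,k}(G)})`. -/
noncomputable def MHkk (G : SimpleGraph V) (k : ℕ) : Submodule ℤ (List V →₀ ℤ) :=
  MC G k k ⊓ LinearMap.ker (bdry G k)

/-- `β_{k,k}(G)`, the rank of `EMH_{k,k}(G)`. -/
noncomputable def emBetti (G : SimpleGraph V) (k : ℕ) : ℕ :=
  Module.finrank ℤ (EMHkk G k)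

/-- `c(G,H)`: the number of vertex subsets of `G` whose induced subgraph is isomorphic
to `H`. -/
noncomputable def subgraphCount (G : SimpleGraph V) {W : Type*} (H : SimpleGraph W) : ℕ :=
  Set.ncard {s : Set V | Nonempty ((G.induce s) ≃g H)}
section Aux
open Finset
variable {V : Type*} (G : SimpleGraph V)

lemma mlen_pair (a c : V) : mlen G [a, c] = G.edist a c := by
  simp [mlen]

lemma mlen_triple (a b c : V) : mlen G [a, b, c] = G.edist a b + G.edist b c := by
  simp [mlen]

lemma two_of_sum (m n : ℕ∞) (hm : m ≠ 0) (hm' : m ≠ ⊤) (hn : n ≠ 0) (hn' : n ≠ ⊤)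
    (h : m + n = 2) : m = 1 ∧ n = 1 := by
  lift m to ℕ using hm'
  lift n to ℕ using hn'
  have : m + n = 2 := by exact_mod_cast h
  have hm0 : m ≠ 0 := by simpa using hm
  have hn0 : n ≠ 0 := by simpa using hn
  constructor <;> [skip; skip] <;> norm_cast <;> omega

lemma mem_etrails22 (l : List V) :
    l ∈ etrails G 2 2 ↔ ∃ a b c, G.Adj a b ∧ G.Adj b c ∧ a ≠ c ∧ l = [a, b, c] := by
  constructor
  · rintro ⟨⟨hlen, htrail, hmlen⟩, hnodup⟩
    obtain ⟨a, b, c, rfl⟩ := List.length_eq_three.mp hlen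
    rw [mlen_triple] at hmlen
    obtain ⟨hab, hra⟩ := (List.isChain_cons_cons.mp htrail).1
    obtain ⟨hbc, hrb⟩ := (List.isChain_cons_cons.mp ((List.isChain_cons_cons.mp htrail).2)).1
    have h1 : G.edist a b = 1 ∧ G.edist b c = 1 := by
      refine two_of_sum _ _ ?_ ?_ ?_ ?_ hmlen
      · simpa [SimpleGraph.edist_eq_zero_iff] using hab
      · exact SimpleGraph.edist_ne_top_iff_reachable.mpr hra
      · simpa [SimpleGraph.edist_eq_zero_iff] using hbc
      · exact SimpleGraph.edist_ne_top_iff_reachable.mpr hrb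
    have hac : a ≠ c := by simp at hnodup; tauto
    exact ⟨a, b, c, (SimpleGraph.edist_eq_one_iff_adj).mp h1.1,
      (SimpleGraph.edist_eq_one_iff_adj).mp h1.2, hac, rfl⟩
  · rintro ⟨a, b, c, hab, hbc, hac, rfl⟩
    refine ⟨⟨rfl, ?_, ?_⟩, ?_⟩
    · exact List.isChain_cons_cons.mpr ⟨⟨hab.ne, hab.reachable⟩,
        List.isChain_cons_cons.mpr ⟨⟨hbc.ne, hbc.reachable⟩, List.isChain_singleton _⟩⟩
    · rw [mlen_triple, SimpleGraph.edist_eq_one_iff_adj.mpr hab,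
        SimpleGraph.edist_eq_one_iff_adj.mpr hbc]
      rfl
    · simp [hab.ne, hbc.ne, hac]

lemma exists_mid {a c : V} (h : G.edist a c = 2) : ∃ b, G.Adj a b ∧ G.Adj b c := by
  obtain ⟨p, hp⟩ := SimpleGraph.exists_walk_of_edist_eq_coe (k := 2) h
  cases p with
  | nil => simp at hp
  | cons h1 q =>
    cases q with
    | nil => simp at hp
    | cons h2 r =>
      cases r with
      | nil => exact ⟨_, h1, h2⟩
      | cons h3 s => simp [SimpleGraph.Walk.length_cons] at hp

lemma bdryElt_triple (a b c : V) :
    bdryElt G 2 [a, b, c] = if G.edist a c = 2 then -(Finsupp.single [a, c] 1) else 0 := by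
  have h2 : Finset.Ioo 0 ([a,b,c].length - 1) = {1} := by show Finset.Ioo 0 2 = {1}; decide
  rw [bdryElt, h2, Finset.sum_singleton]
  have he : [a, b, c].eraseIdx 1 = [a, c] := rfl
  rw [he, mlen_pair]
  have hc : ((2:ℕ):ℕ∞) = (2:ℕ∞) := by norm_cast
  rw [hc]
  split_ifs with h
  · simp
  · rfl

end Aux
section LinAlg
variable {V : Type*} (G : SimpleGraph V)

lemma bdry_single (ℓ : ℕ) (l : List V) (r : ℤ) :
    bdry G ℓ (Finsupp.single l r) = r • bdryElt G ℓ l := by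
  simp [bdry]

lemma bdry_apply (ℓ : ℕ) (f : List V →₀ ℤ) :
    bdry G ℓ f = f.sum fun l r => r • bdryElt G ℓ l := by
  simp [bdry, Finsupp.lsum_apply, Finsupp.sum, LinearMap.toSpanSingleton_apply]

/-- The set of length-2 landmark lists `[a,c]` with `d(a,c)=2`. -/
def Dset : Set (List V) := {m | ∃ a c : V, G.edist a c = 2 ∧ m = [a, c]}

lemma support_bdryElt_subset {l : List V} (hl : l ∈ etrails G 2 2) :
    ((bdryElt G 2 l).support : Set (List V)) ⊆ Dset G := by
  obtain ⟨a, b, c, hab, hbc, hac, rfl⟩ := (mem_etrails22 G l).mp hl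
  rw [bdryElt_triple]
  split_ifs with h
  · intro x hx
    simp only [Finsupp.support_neg, Finsupp.mem_support_iff, Finsupp.single_apply] at hx
    have : x = [a, c] := by by_contra hne; simp [Ne.symm hne] at hx; exact hne hx
    exact this ▸ ⟨a, c, h, rfl⟩
  · simp

lemma single_triple_mem_EMC {a b c : V} (hab : G.Adj a b) (hbc : G.Adj b c) (hac : a ≠ c)
    (r : ℤ) : Finsupp.single [a, b, c] r ∈ EMC G 2 2 := by
  rw [EMC, Finsupp.mem_supported]
  refine Set.Subset.trans (Finset.coe_subset.mpr Finsupp.support_single_subset) ?_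
  intro x hx
  simp only [Finset.coe_singleton, Set.mem_singleton_iff] at hx
  exact hx ▸ (mem_etrails22 G _).mpr ⟨a, b, c, hab, hbc, hac, rfl⟩

lemma map_bdry_EMC :
    Submodule.map (bdry G 2) (EMC G 2 2) = Finsupp.supported ℤ ℤ (Dset G) := by
  apply le_antisymm
  · rintro _ ⟨f, hf, rfl⟩
    rw [Finsupp.mem_supported, bdry_apply]
    refine Set.Subset.trans (Finset.coe_subset.mpr Finsupp.support_sum) ?_
    intro x hx
    simp only [Finset.coe_biUnion, Set.mem_iUnion, Finset.mem_coe] at hx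
    obtain ⟨l, hl, hx⟩ := hx
    have hlmem : l ∈ etrails G 2 2 := (Finsupp.mem_supported ℤ f).mp hf hl
    exact support_bdryElt_subset G hlmem (Finset.mem_coe.mpr (Finsupp.support_smul hx))
  · rw [Finsupp.supported_eq_span_single, Submodule.span_le]
    rintro _ ⟨m, hm, rfl⟩
    obtain ⟨a, c, h2, rfl⟩ := hm
    obtain ⟨b, hab, hbc⟩ := exists_mid G h2
    have hac : a ≠ c := by
      intro h; rw [h, SimpleGraph.edist_self] at h2; simp at h2
    refine ⟨Finsupp.single [a, b, c] (-1), single_triple_mem_EMC G hab hbc hac _, ?_⟩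
    rw [bdry_single, bdryElt_triple, if_pos h2]
    simp

end LinAlg
section Rank
variable {V : Type*} [Fintype V] (G : SimpleGraph V)

set_option maxHeartbeats 1000000 in
omit [Fintype V] in
lemma rank_supported_finset (t : Finset (List V)) :
    Module.rank ℤ (Finsupp.supported ℤ ℤ (↑t : Set (List V))) = t.card := by
  rw [(Finsupp.supportedEquivFinsupp (↑t : Set (List V))).rank_eq, rank_finsupp_self]
  simp [Cardinal.mk_coe_finset]

/-- Eulerian 2-trails of length 2, as a finset. -/
noncomputable def Sfin : Finset (List V) :=
  ((Finset.univ : Finset (V × V × V)).filter fun t =>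
    G.Adj t.1 t.2.1 ∧ G.Adj t.2.1 t.2.2 ∧ t.1 ≠ t.2.2).image fun t => [t.1, t.2.1, t.2.2]

/-- Pairs at distance 2, as a finset of lists. -/
noncomputable def Dfin : Finset (List V) :=
  ((Finset.univ : Finset (V × V)).filter fun p => G.edist p.1 p.2 = 2).image
    fun p => [p.1, p.2]

lemma etrails_eq_Sfin : etrails G 2 2 = ↑(Sfin G) := by
  ext l
  rw [mem_etrails22]
  simp only [Sfin, Finset.coe_image, Set.mem_image, Finset.mem_coe, Finset.mem_filter,
    Finset.mem_univ, true_and]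
  constructor
  · rintro ⟨a, b, c, hab, hbc, hac, rfl⟩; exact ⟨(a, b, c), ⟨hab, hbc, hac⟩, rfl⟩
  · rintro ⟨⟨a, b, c⟩, ⟨hab, hbc, hac⟩, rfl⟩; exact ⟨a, b, c, hab, hbc, hac, rfl⟩

lemma Dset_eq_Dfin : Dset G = ↑(Dfin G) := by
  ext l
  simp only [Dset, Set.mem_setOf_eq, Dfin, Finset.coe_image, Set.mem_image, Finset.mem_coe,
    Finset.mem_filter, Finset.mem_univ, true_and]
  constructor
  · rintro ⟨a, c, h, rfl⟩; exact ⟨(a, c), h, rfl⟩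
  · rintro ⟨⟨a, c⟩, h, rfl⟩; exact ⟨a, c, h, rfl⟩

lemma finrank_EMHkk_add :
    Module.finrank ℤ (EMHkk G 2) + (Dfin G).card = (Sfin G).card := by
  classical
  set F := (bdry G 2).comp (EMC G 2 2).subtype with hF
  have hkcomp : LinearMap.ker F =
      Submodule.comap (EMC G 2 2).subtype (LinearMap.ker (bdry G 2)) :=
    LinearMap.ker_comp _ _
  have hEMH : EMHkk G 2 = Submodule.map (EMC G 2 2).subtype (LinearMap.ker F) := by
    rw [hkcomp, Submodule.map_comap_subtype]; rfl
  have hfr : Module.finrank ℤ (EMHkk G 2) =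
      Cardinal.toNat (Module.rank ℤ (LinearMap.ker F)) := by
    rw [hEMH, Module.finrank]
    congr 1
    exact ((Submodule.equivSubtypeMap (EMC G 2 2) (LinearMap.ker F)).rank_eq).symm
  have hrange : LinearMap.range F = Finsupp.supported ℤ ℤ (Dset G) := by
    rw [hF, LinearMap.range_comp, Submodule.range_subtype]
    exact map_bdry_EMC G
  have hrn := LinearMap.rank_range_add_rank_ker F
  have hrr : Module.rank ℤ (LinearMap.range F) = ((Dfin G).card : Cardinal) := by
    rw [hrange, Dset_eq_Dfin, rank_supported_finset]
  have hre : Module.rank ℤ (EMC G 2 2) = ((Sfin G).card : Cardinal) := by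
    have : EMC G 2 2 = Finsupp.supported ℤ ℤ (↑(Sfin G) : Set (List V)) := by
      rw [EMC, etrails_eq_Sfin]
    rw [this, rank_supported_finset]
  rw [hrr, hre] at hrn
  have hklt : Module.rank ℤ (LinearMap.ker F) < Cardinal.aleph0 := by
    refine lt_of_le_of_lt ?_ (Cardinal.nat_lt_aleph0 (Sfin G).card)
    calc Module.rank ℤ (LinearMap.ker F) ≤ ((Dfin G).card : Cardinal) +
        Module.rank ℤ (LinearMap.ker F) := le_add_self
      _ = _ := hrn
  have := congrArg Cardinal.toNat hrn
  rw [Cardinal.toNat_add (Cardinal.nat_lt_aleph0 _) hklt, Cardinal.toNat_natCast,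
    Cardinal.toNat_natCast] at this
  rw [hfr]
  omega

end Rank
section Count
open Finset
variable {V : Type*} [Fintype V] (G : SimpleGraph V)

omit [Fintype V] in
lemma edist_eq_two_iff {a c : V} :
    G.edist a c = 2 ↔ ¬G.Adj a c ∧ a ≠ c ∧ ∃ b, G.Adj a b ∧ G.Adj b c := by
  constructor
  · intro h
    refine ⟨fun hadj => ?_, fun he => ?_, exists_mid G h⟩
    · rw [SimpleGraph.edist_eq_one_iff_adj.mpr hadj] at h; simp at h
    · rw [he, SimpleGraph.edist_self] at h; simp at h
  · rintro ⟨hnadj, hne, b, hab, hbc⟩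
    have hle : G.edist a c ≤ 2 := by
      have := G.edist_le ((hbc.toWalk).cons hab)
      simpa using this
    have h0 : G.edist a c ≠ 0 := by simp [SimpleGraph.edist_eq_zero_iff, hne]
    have h1 : G.edist a c ≠ 1 := fun h => hnadj (SimpleGraph.edist_eq_one_iff_adj.mp h)
    have htop : G.edist a c ≠ ⊤ := fun h => by rw [h] at hle; simp at hle
    lift G.edist a c to ℕ using htop with m hm
    have hle' : m ≤ 2 := by exact_mod_cast hle
    have h0' : m ≠ 0 := by simpa using h0
    have h1' : m ≠ 1 := by exact_mod_cast h1
    have : m = 2 := by omega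
    exact_mod_cast congrArg Nat.cast this

/-- ordered triples forming triangles -/
noncomputable def Tri : Finset (V × V × V) :=
  Finset.univ.filter fun t => G.Adj t.1 t.2.1 ∧ G.Adj t.2.1 t.2.2 ∧ G.Adj t.1 t.2.2

/-- ordered pairs at distance two -/
noncomputable def Pfin : Finset (V × V) := Finset.univ.filter fun p => G.edist p.1 p.2 = 2

/-- number of common neighbours of an ordered pair -/
noncomputable def ncbr (p : V × V) : ℕ :=
  (Finset.univ.filter fun w => G.Adj p.1 w ∧ G.Adj w p.2).card

lemma card_Sfin : (Sfin G).card = (Tri G).card + ∑ p ∈ Pfin G, ncbr G p := by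
  have hinj : Function.Injective fun t : V × V × V => [t.1, t.2.1, t.2.2] := by
    rintro ⟨a1, a2, a3⟩ ⟨b1, b2, b3⟩ h
    simp_all
  rw [Sfin, Finset.card_image_of_injective _ hinj]
  have hsplit : (Finset.univ.filter fun t : V × V × V =>
      G.Adj t.1 t.2.1 ∧ G.Adj t.2.1 t.2.2 ∧ t.1 ≠ t.2.2) =
      Tri G ∪ (Finset.univ.filter fun t : V × V × V =>
        G.Adj t.1 t.2.1 ∧ G.Adj t.2.1 t.2.2 ∧ G.edist t.1 t.2.2 = 2) := by
    ext ⟨a, b, c⟩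
    simp only [Finset.mem_filter, Finset.mem_univ, true_and, Finset.mem_union, Tri]
    constructor
    · rintro ⟨hab, hbc, hac⟩
      by_cases h : G.Adj a c
      · exact Or.inl ⟨hab, hbc, h⟩
      · exact Or.inr ⟨hab, hbc, (edist_eq_two_iff G).mpr ⟨h, hac, b, hab, hbc⟩⟩
    · rintro (⟨hab, hbc, hac⟩ | ⟨hab, hbc, hd⟩)
      · exact ⟨hab, hbc, hac.ne⟩
      · exact ⟨hab, hbc, ((edist_eq_two_iff G).mp hd).2.1⟩
  rw [hsplit, Finset.card_union_of_disjoint]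
  · congr 1
    -- middles count
    rw [Finset.card_eq_sum_card_fiberwise
      (f := fun t : V × V × V => (t.1, t.2.2)) (t := Pfin G)
      (fun t ht => by
        simp only [Finset.mem_coe, Finset.mem_filter, Finset.mem_univ, true_and] at ht
        simp [Pfin, ht.2.2])]
    refine Finset.sum_congr rfl fun p hp => ?_
    obtain ⟨p1, p2⟩ := p
    simp only [Pfin, Finset.mem_filter, Finset.mem_univ, true_and] at hp
    rw [ncbr]
    apply Finset.card_bij (fun t _ => t.2.1)
    · rintro ⟨a, b, c⟩ ht
      simp only [Finset.mem_filter, Finset.mem_univ, true_and, Prod.mk.injEq] at ht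
      obtain ⟨⟨hab, hbc, _⟩, h1, h2⟩ := ht
      simp only [Finset.mem_filter, Finset.mem_univ, true_and]
      exact ⟨h1 ▸ hab, h2 ▸ hbc⟩
    · rintro ⟨a, b, c⟩ ht ⟨a', b', c'⟩ ht' h
      simp only [Finset.mem_filter, Finset.mem_univ, true_and, Prod.mk.injEq] at ht ht'
      simp only at h
      obtain ⟨_, h1, h2⟩ := ht; obtain ⟨_, h1', h2'⟩ := ht'
      simp [Prod.ext_iff, h, h1, h2, h1', h2']
    · intro w hw
      simp only [Finset.mem_filter, Finset.mem_univ, true_and] at hw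
      refine ⟨(p1, w, p2), ?_, rfl⟩
      simp only [Finset.mem_filter, Finset.mem_univ, true_and, Prod.mk.injEq]
      exact ⟨⟨hw.1, hw.2, hp⟩, trivial⟩
  · rw [Tri, Finset.disjoint_filter]
    rintro ⟨a, b, c⟩ _ ⟨hab, hbc, hac⟩ ⟨_, _, hd⟩
    exact ((edist_eq_two_iff G).mp hd).1 hac

lemma card_Dfin : (Dfin G).card = (Pfin G).card := by
  have hinj : Function.Injective fun p : V × V => [p.1, p.2] := by
    rintro ⟨a1, a2⟩ ⟨b1, b2⟩ h
    simp_all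
  rw [Dfin, Finset.card_image_of_injective _ hinj]; rfl

end Count
section Pairs
variable {V : Type*} [Fintype V] (G : SimpleGraph V)

/-- unordered pairs at distance 2 -/
noncomputable def Qset : Finset (Finset V) := Finset.univ.filter fun s =>
  s.card = 2 ∧ ∃ u ∈ s, ∃ v ∈ s, u ≠ v ∧ G.edist u v = 2

/-- number of common neighbours of all of `s` -/
noncomputable def gcount (s : Finset V) : ℕ :=
  (Finset.univ.filter fun w => ∀ u ∈ s, G.Adj u w).card

lemma mem_Qset_of_pair {u v : V} (h : G.edist u v = 2) : ({u, v} : Finset V) ∈ Qset G := by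
  have hne : u ≠ v := ((edist_eq_two_iff G).mp h).2.1
  simp only [Qset, Finset.mem_filter, Finset.mem_univ, true_and]
  exact ⟨Finset.card_pair hne, u, by simp, v, by simp, hne, h⟩

lemma Qset_spec {s : Finset V} (hs : s ∈ Qset G) :
    ∃ u v, u ≠ v ∧ G.edist u v = 2 ∧ s = {u, v} := by
  simp only [Qset, Finset.mem_filter, Finset.mem_univ, true_and] at hs
  obtain ⟨hcard, u, hu, v, hv, hne, hd⟩ := hs
  refine ⟨u, v, hne, hd, ?_⟩
  refine (Finset.eq_of_subset_of_card_le ?_ ?_).symm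
  · intro x hx
    rcases Finset.mem_insert.mp hx with h | h
    · exact h ▸ hu
    · exact (Finset.mem_singleton.mp h) ▸ hv
  · rw [hcard, Finset.card_pair hne]

lemma sum_Pfin_eq (f : V × V → ℕ) (g : Finset V → ℕ)
    (hfg : ∀ u v, G.edist u v = 2 → f (u, v) = g {u, v}) :
    ∑ p ∈ Pfin G, f p = ∑ s ∈ Qset G, 2 * g s := by
  have hmaps : ∀ p ∈ Pfin G, ({p.1, p.2} : Finset V) ∈ Qset G := by
    rintro ⟨u, v⟩ hp
    simp only [Pfin, Finset.mem_filter, Finset.mem_univ, true_and] at hp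
    exact mem_Qset_of_pair G hp
  rw [← Finset.sum_fiberwise_of_maps_to hmaps f]
  refine Finset.sum_congr rfl fun s hs => ?_
  obtain ⟨u, v, hne, hd, rfl⟩ := Qset_spec G hs
  have hfiber : (Pfin G).filter (fun p => ({p.1, p.2} : Finset V) = {u, v}) =
      {(u, v), (v, u)} := by
    ext ⟨x, y⟩
    simp only [Finset.mem_filter, Pfin, Finset.mem_univ, true_and, Finset.mem_insert,
      Finset.mem_singleton, Prod.mk.injEq]
    constructor
    · rintro ⟨hxy, hpair⟩
      have hxyne : x ≠ y := ((edist_eq_two_iff G).mp hxy).2.1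
      have hx : x = u ∨ x = v := by
        have : x ∈ ({u, v} : Finset V) := hpair ▸ (by simp)
        simpa using this
      have hy : y = u ∨ y = v := by
        have : y ∈ ({u, v} : Finset V) := hpair ▸ (by simp)
        simpa using this
      rcases hx with rfl | rfl <;> rcases hy with rfl | rfl <;> tauto
    · rintro (⟨rfl, rfl⟩ | ⟨rfl, rfl⟩)
      · exact ⟨hd, rfl⟩
      · exact ⟨by rwa [SimpleGraph.edist_comm], by rw [Finset.pair_comm]⟩
  rw [hfiber, Finset.sum_pair (by simp [Prod.ext_iff, hne])]
  rw [hfg u v hd, hfg v u (by rwa [SimpleGraph.edist_comm]), Finset.pair_comm v u]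
  ring

lemma card_Pfin_eq : (Pfin G).card = ∑ s ∈ Qset G, 2 := by
  have h := sum_Pfin_eq G (fun _ => 1) (fun _ => 1) (fun _ _ _ => rfl)
  simpa using h

lemma sum_ncbr_eq : ∑ p ∈ Pfin G, ncbr G p = ∑ s ∈ Qset G, 2 * gcount G s := by
  refine sum_Pfin_eq G _ _ fun u v h2 => ?_
  unfold ncbr gcount
  congr 1
  ext w
  simp only [Finset.mem_filter, Finset.mem_univ, true_and, Finset.mem_insert,
    Finset.mem_singleton]
  constructor
  · rintro ⟨h1, h2⟩ x hx
    rcases hx with rfl | rfl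
    · exact h1
    · exact h2.symm
  · intro h
    exact ⟨h u (Or.inl rfl), (h v (Or.inr rfl)).symm⟩

lemma gcount_pos {s : Finset V} (hs : s ∈ Qset G) : 1 ≤ gcount G s := by
  obtain ⟨u, v, hne, hd, rfl⟩ := Qset_spec G hs
  obtain ⟨b, hub, hbv⟩ := exists_mid G hd
  rw [gcount]
  refine Finset.card_pos.mpr ⟨b, ?_⟩
  simp only [Finset.mem_filter, Finset.mem_univ, true_and]
  intro x hx
  rcases Finset.mem_insert.mp hx with rfl | hx
  · exact hub
  · rw [Finset.mem_singleton.mp hx]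
    exact hbv.symm

lemma ncard_W_eq (s : Finset V) :
    Set.ncard {w : V | ∀ u ∈ s, G.Adj u w} = gcount G s := by
  rw [Set.ncard_eq_toFinset_card']
  rw [gcount]
  congr 1
  ext w
  simp

lemma finsum_eq_sum_Qset :
    (∑ᶠ (s : Finset V)
      (_ : s.card = 2 ∧ ∃ u ∈ s, ∃ v ∈ s, u ≠ v ∧ G.edist u v = 2),
      2 * (Set.ncard {w : V | ∀ u ∈ s, G.Adj u w} - 1)) =
    ∑ s ∈ Qset G, 2 * (gcount G s - 1) := by
  rw [finsum_cond_eq_sum_of_cond_iff (t := Qset G) _ (fun {s} _ => by simp [Qset])]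
  exact Finset.sum_congr rfl fun s _ => by rw [ncard_W_eq]

end Pairs
section Tri3
variable {V : Type*} [Fintype V] (G : SimpleGraph V)

omit [Fintype V] in
lemma nonempty_iso_C3_iff (s : Set V) [Fintype s] :
    Nonempty (G.induce s ≃g SimpleGraph.cycleGraph 3) ↔
      ∃ a b c : V, a ≠ b ∧ a ≠ c ∧ b ≠ c ∧ G.Adj a b ∧ G.Adj a c ∧ G.Adj b c ∧
        s = {a, b, c} := by
  constructor
  · rintro ⟨e⟩
    rw [SimpleGraph.cycleGraph_three_eq_top] at e
    set f := e.symm with hf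
    have hinj : Function.Injective f := f.injective
    have hval : ∀ i j : Fin 3, i ≠ j → (f i : V) ≠ (f j : V) := by
      intro i j hij hv
      exact hij (hinj (Subtype.ext hv))
    have hadj : ∀ i j : Fin 3, i ≠ j → G.Adj (f i : V) (f j : V) := by
      intro i j hij
      have h2 : (G.induce s).Adj (f i) (f j) := f.map_adj_iff.mpr (by simpa using hij)
      simpa [SimpleGraph.comap_adj] using h2
    refine ⟨f 0, f 1, f 2, hval 0 1 (by decide), hval 0 2 (by decide), hval 1 2 (by decide),
      hadj 0 1 (by decide), hadj 0 2 (by decide), hadj 1 2 (by decide), ?_⟩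
    ext x
    simp only [Set.mem_insert_iff, Set.mem_singleton_iff]
    constructor
    · intro hx
      have hi : e ⟨x, hx⟩ = 0 ∨ e ⟨x, hx⟩ = 1 ∨ e ⟨x, hx⟩ = 2 := by
        have : ∀ i : Fin 3, i = 0 ∨ i = 1 ∨ i = 2 := by decide
        exact this _
      rcases hi with h | h | h
      · left; rw [← h]; simp [hf]
      · right; left; rw [← h]; simp [hf]
      · right; right; rw [← h]; simp [hf]
    · rintro (rfl | rfl | rfl) <;> exact Subtype.mem _
  · rintro ⟨a, b, c, hab, hac, hbc, gab, gac, gbc, rfl⟩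
    have htop : G.induce ({a, b, c} : Set V) = (⊤ : SimpleGraph ({a, b, c} : Set V)) := by
      ext x y
      simp only [SimpleGraph.comap_adj, SimpleGraph.top_adj, Function.Embedding.coe_subtype]
      constructor
      · intro h hxy
        exact G.ne_of_adj (by exact h) (by rw [hxy])
      · intro hxy
        obtain ⟨x, hx⟩ := x
        obtain ⟨y, hy⟩ := y
        have hxy' : x ≠ y := fun h => hxy (Subtype.ext h)
        simp only [Set.mem_insert_iff, Set.mem_singleton_iff] at hx hy
        rcases hx with rfl | rfl | rfl <;> rcases hy with rfl | rfl | rfl <;>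
          first
            | exact absurd rfl hxy'
            | exact gab | exact gab.symm | exact gac | exact gac.symm
            | exact gbc | exact gbc.symm
    have hcard : Fintype.card ({a, b, c} : Set V) = 3 := by
      rw [← Set.toFinset_card]
      rw [Set.toFinset_insert, Set.toFinset_insert, Set.toFinset_singleton]
      rw [Finset.card_insert_of_notMem (by simp [hab, hac]),
        Finset.card_pair hbc]
    refine ⟨?_⟩
    rw [htop, SimpleGraph.cycleGraph_three_eq_top]
    exact SimpleGraph.Iso.completeGraph (Fintype.equivFinOfCardEq hcard)

lemma subgraphCount_C3_eq :
    subgraphCount G (SimpleGraph.cycleGraph 3) =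
      (Finset.univ.filter fun f : Finset V =>
        Nonempty (G.induce (↑f : Set V) ≃g SimpleGraph.cycleGraph 3)).card := by
  rw [subgraphCount]
  have himg : {s : Set V | Nonempty (G.induce s ≃g SimpleGraph.cycleGraph 3)} =
      (fun f : Finset V => (↑f : Set V)) ''
        {f : Finset V | Nonempty (G.induce (↑f : Set V) ≃g SimpleGraph.cycleGraph 3)} := by
    ext s
    constructor
    · intro hs
      refine ⟨s.toFinset, ?_, Set.coe_toFinset s⟩
      have hcoe : ((s.toFinset : Finset V) : Set V) = s := Set.coe_toFinset s
      show Nonempty (G.induce (↑(s.toFinset) : Set V) ≃g SimpleGraph.cycleGraph 3)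
      rw [hcoe]
      exact hs
    · rintro ⟨f, hf, rfl⟩
      exact hf
  rw [himg, Set.ncard_image_of_injective _ Finset.coe_injective,
    Set.ncard_eq_toFinset_card']
  congr 1
  ext f
  simp

lemma card_Tri : (Tri G).card = 6 * subgraphCount G (SimpleGraph.cycleGraph 3) := by
  rw [subgraphCount_C3_eq]
  set TS := Finset.univ.filter fun f : Finset V =>
    Nonempty (G.induce (↑f : Set V) ≃g SimpleGraph.cycleGraph 3) with hTS
  have hmaps : ∀ t ∈ Tri G, ({t.1, t.2.1, t.2.2} : Finset V) ∈ TS := by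
    rintro ⟨a, b, c⟩ ht
    simp only [Tri, Finset.mem_filter, Finset.mem_univ, true_and] at ht
    obtain ⟨gab, gbc, gac⟩ := ht
    rw [hTS, Finset.mem_filter]
    refine ⟨Finset.mem_univ _, ?_⟩
    rw [nonempty_iso_C3_iff]
    exact ⟨a, b, c, gab.ne, gac.ne, gbc.ne, gab, gac, gbc, by simp⟩
  rw [Finset.card_eq_sum_card_fiberwise hmaps]
  have fiber6 : ∀ f ∈ TS, ((Tri G).filter
      fun t : V × V × V => ({t.1, t.2.1, t.2.2} : Finset V) = f).card = 6 := by
    intro f hf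
    rw [hTS, Finset.mem_filter] at hf
    rw [nonempty_iso_C3_iff] at hf
    obtain ⟨_, a, b, c, hab, hac, hbc, gab, gac, gbc, hset⟩ := hf
    have hba := hab.symm; have hca := hac.symm; have hcb := hbc.symm
    have gba := gab.symm; have gca := gac.symm; have gcb := gbc.symm
    have hfeq : f = ({a, b, c} : Finset V) := by
      apply Finset.coe_injective
      simp only [Finset.coe_insert, Finset.coe_singleton]
      exact hset
    subst hfeq
    have hfiber : (Tri G).filter
        (fun t : V × V × V => ({t.1, t.2.1, t.2.2} : Finset V) = ({a, b, c} : Finset V)) =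
        ({(a,b,c), (a,c,b), (b,a,c), (b,c,a), (c,a,b), (c,b,a)} : Finset (V × V × V)) := by
      ext ⟨x, y, z⟩
      simp only [Tri, Finset.mem_filter, Finset.mem_univ, true_and, Finset.mem_insert,
        Finset.mem_singleton, Prod.mk.injEq]
      constructor
      · rintro ⟨⟨gxy, gyz, gxz⟩, hkey⟩
        have hx : x = a ∨ x = b ∨ x = c := by
          have : x ∈ ({a, b, c} : Finset V) := hkey ▸ (by simp)
          simpa using this
        have hy : y = a ∨ y = b ∨ y = c := by
          have : y ∈ ({a, b, c} : Finset V) := hkey ▸ (by simp)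
          simpa using this
        have hz : z = a ∨ z = b ∨ z = c := by
          have : z ∈ ({a, b, c} : Finset V) := hkey ▸ (by simp)
          simpa using this
        have ha' : a ∈ ({x, y, z} : Finset V) := hkey.symm ▸ (by simp)
        have hb' : b ∈ ({x, y, z} : Finset V) := hkey.symm ▸ (by simp)
        have hc' : c ∈ ({x, y, z} : Finset V) := hkey.symm ▸ (by simp)
        simp only [Finset.mem_insert, Finset.mem_singleton] at ha' hb' hc'
        have nxy := gxy.ne; have nyz := gyz.ne; have nxz := gxz.ne
        rcases hx with rfl | rfl | rfl <;> rcases hy with rfl | rfl | rfl <;>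
          rcases hz with rfl | rfl | rfl <;> simp_all
      · rintro (⟨rfl, rfl, rfl⟩ | ⟨rfl, rfl, rfl⟩ | ⟨rfl, rfl, rfl⟩ | ⟨rfl, rfl, rfl⟩ |
          ⟨rfl, rfl, rfl⟩ | ⟨rfl, rfl, rfl⟩) <;>
          refine ⟨⟨?_, ?_, ?_⟩, by ext t; simp; try tauto⟩ <;>
          first | exact gab | exact gba | exact gac | exact gca | exact gbc | exact gcb
    rw [hfiber]
    rw [Finset.card_insert_of_notMem (by simp [Prod.ext_iff, hab, hac, hbc, hba, hca, hcb]),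
      Finset.card_insert_of_notMem (by simp [Prod.ext_iff, hab, hac, hbc, hba, hca, hcb]),
      Finset.card_insert_of_notMem (by simp [Prod.ext_iff, hab, hac, hbc, hba, hca, hcb]),
      Finset.card_insert_of_notMem (by simp [Prod.ext_iff, hab, hac, hbc, hba, hca, hcb]),
      Finset.card_insert_of_notMem (by simp [Prod.ext_iff, hab, hac, hbc, hba, hca, hcb]),
      Finset.card_singleton]
  rw [Finset.sum_congr rfl fiber6, Finset.sum_const, smul_eq_mul, mul_comm]

end Tri3

/-- for a finite simple graph `G`,
`rank EMH_{2,2}(G) = 6·c(G,C₃) + Σ_{{u,v} : d(u,v)=2} 2·(|V_{u,v}| - 1)`, where the sum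
ranges over unordered pairs (2-element subsets) `{u,v}` of vertices at distance 2 and
`V_{u,v}` is the set of common neighbours of `u` and `v`. -/
theorem rank_emh22_eq {V : Type*} [Fintype V] (G : SimpleGraph V) :
    Module.finrank ℤ (EMHkk G 2) =
      6 * subgraphCount G (SimpleGraph.cycleGraph 3) +
      ∑ᶠ (s : Finset V)
        (_ : s.card = 2 ∧ ∃ u ∈ s, ∃ v ∈ s, u ≠ v ∧ G.edist u v = 2),
        2 * (Set.ncard {w : V | ∀ u ∈ s, G.Adj u w} - 1) := by
  classical
  have h1 := finrank_EMHkk_add G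
  have h2 := card_Sfin G
  have h3 := card_Dfin G
  have h4 := card_Tri G
  have h5 := card_Pfin_eq G
  have h6 := sum_ncbr_eq G
  rw [finsum_eq_sum_Qset]
  have h7 : ∑ s ∈ Qset G, 2 * gcount G s =
      (∑ s ∈ Qset G, 2 * (gcount G s - 1)) + ∑ s ∈ Qset G, 2 := by
    rw [← Finset.sum_add_distrib]
    refine Finset.sum_congr rfl fun s hs => ?_
    have := gcount_pos G hs
    omega
  omega
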